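/- arXiv:1601.04614 — 5 statements merged into one kernel-verified Lean document; each statement's English description precedes it below -/
import Mathlib

section
/- Reduction principle for support theorems: Let X be a metric space with escape function P : ℝ≥0 → ℝ≥0, let r₀ ≥ 0 and μ, σ : [r₀,∞) → ℝ≥0 with P(σ(r)) ≤ μ(r) for all r ≥ r₀. Fix p ∈ X, r ≥ r₀, and let f : X → ℝ be continuous with compact support such that t ↦ f(γ(t)) is integrable for every local geodesic line γ of X and ∫_ℝ f(γ(t)) dt = 0 for every local geodesic line γ of X satisfying d(γ(t), p) > σ(r) for all t ∈ ℝ. Assume that for every x ∈ X there exist a metric space Y, a continuous map φ : Y → X, and points q, y ∈ Y with φ(q) = p and φ(y) = x such that: (a) for every local geodesic line σ' of Y, φ∘σ' is a local geodesic line of X; (b) d_X(x, p) ≤ d_Y(y, q); (c) d_Y(y', q) ≤ P(d_X(φ(y'), p)) for all y' ∈ Y; (d) f∘φ has compact support in Y; (e) Y satisfies the μ-support theorem at q: for every continuous compactly supported g : Y → ℝ (integrable along all local geodesic lines of Y) and every r' ∈ [r₀,∞), if ∫_ℝ g(σ'(t)) dt = 0 for every local geodesic line σ' of Y with d(σ'(t),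 q) > μ(r') for all t, then g vanishes outside the closed ball of radius r' around q. Then f(x) = 0 for every x ∈ X with d(x, p) > r. -/
open MeasureTheory

/-- A (unit-speed) local geodesic line in a metric space: around every parameter `t`
there is `ε > 0` such that the map is an isometric embedding of `[t - ε, t + ε]`. -/
def IsLocalGeodesicLine {X : Type*} [MetricSpace X] (γ : ℝ → X) : Prop :=
  ∀ t : ℝ, ∃ ε > (0:ℝ), ∀ s ∈ Set.Icc (t - ε) (t + ε), ∀ s' ∈ Set.Icc (t - ε) (t + ε),
    dist (γ s) (γ s') = |s - s'|

lemma IsLocalGeodesicLine.continuous {X : Type*} [MetricSpace X] {γ : ℝ → X}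
    (h : IsLocalGeodesicLine γ) : Continuous γ := by
  rw [Metric.continuous_iff]
  intro t δ hδ
  obtain ⟨ε, hε, hiso⟩ := h t
  refine ⟨min ε δ, lt_min hε hδ, fun s hs => ?_⟩
  have h1 : |s - t| < min ε δ := by rwa [Real.dist_eq] at hs
  have h2 : |s - t| < ε := lt_of_lt_of_le h1 (min_le_left _ _)
  have h3 := abs_lt.1 h2
  have hsI : s ∈ Set.Icc (t - ε) (t + ε) := ⟨by linarith [h3.1], by linarith [h3.2]⟩
  have htI : t ∈ Set.Icc (t - ε) (t + ε) := ⟨by linarith, by linarith⟩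
  rw [hiso s hsI t htI]
  exact lt_of_lt_of_le h1 (min_le_right _ _)

universe u v

/-- **Reduction principle for support theorems.** Let `X` be a metric space with escape
function `P`, let `μ, σ : [r₀, ∞) → ℝ≥0` with `P (σ r) ≤ μ r`. If the X-ray transform of a
continuous compactly supported `f : X → ℝ` vanishes on all local geodesic lines avoiding the
ball of radius `σ r` around `p`, and every point of `X` lies on a totally geodesic immersed
metric space `Y` through `p` satisfying the `μ`-support theorem, then `f` vanishes outside
the closed ball of radius `r` around `p`. -/
theorem xray_support_reduction_principle
    {X : Type u} [MetricSpace X]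
    (P : ℝ → ℝ)
    (hP : ∀ γ : ℝ → X, IsLocalGeodesicLine γ → ∀ r : ℝ, 0 ≤ r → ∀ t : ℝ, P r < t →
      r < dist (γ 0) (γ t))
    (r₀ : ℝ) (hr₀ : 0 ≤ r₀)
    (μ σ : ℝ → ℝ)
    (hμ : ∀ r, r₀ ≤ r → 0 ≤ μ r) (hσ : ∀ r, r₀ ≤ r → 0 ≤ σ r)
    (hPσμ : ∀ r, r₀ ≤ r → P (σ r) ≤ μ r)
    (p : X) (r : ℝ) (hr : r₀ ≤ r)
    (f : X → ℝ) (hf : Continuous f) (hsupp : HasCompactSupport f)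
    (hint : ∀ γ : ℝ → X, IsLocalGeodesicLine γ → Integrable (fun t => f (γ t)))
    (hzero : ∀ γ : ℝ → X, IsLocalGeodesicLine γ → (∀ t : ℝ, σ r < dist (γ t) p) →
      ∫ t : ℝ, f (γ t) = 0)
    (hred : ∀ x : X, ∃ (Y : Type v) (_ : MetricSpace Y) (φ : Y → X) (q y : Y),
      Continuous φ ∧ φ q = p ∧ φ y = x ∧
      (∀ σ' : ℝ → Y, IsLocalGeodesicLine σ' → IsLocalGeodesicLine (φ ∘ σ')) ∧
      dist x p ≤ dist y q ∧
      (∀ y' : Y, dist y' q ≤ P (dist (φ y') p)) ∧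
      HasCompactSupport (f ∘ φ) ∧
      (∀ g : Y → ℝ, Continuous g → HasCompactSupport g →
        (∀ σ' : ℝ → Y, IsLocalGeodesicLine σ' → Integrable (fun t => g (σ' t))) →
        ∀ r' : ℝ, r₀ ≤ r' →
        (∀ σ' : ℝ → Y, IsLocalGeodesicLine σ' → (∀ t : ℝ, μ r' < dist (σ' t) q) →
          ∫ t : ℝ, g (σ' t) = 0) →
        ∀ y' : Y, r' < dist y' q → g y' = 0)) :
    ∀ x : X, r < dist x p → f x = 0 := by
  intro x hx
  obtain ⟨Y, _, φ, q, y, hφc, hq, hy, hgeo, hxy, hcP, hcs, hst⟩ := hred x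
  have hfφ : Continuous (f ∘ φ) := hf.comp hφc
  have hintY : ∀ σ' : ℝ → Y, IsLocalGeodesicLine σ' →
      Integrable (fun t => (f ∘ φ) (σ' t)) :=
    fun σ' hσ' => hint (φ ∘ σ') (hgeo σ' hσ')
  have hzeroY : ∀ σ' : ℝ → Y, IsLocalGeodesicLine σ' → (∀ t : ℝ, μ r < dist (σ' t) q) →
      ∫ t : ℝ, (f ∘ φ) (σ' t) = 0 := by
    intro σ' hσ' havoid
    have hγ : IsLocalGeodesicLine (φ ∘ σ') := hgeo σ' hσ'
    have hcont : Continuous fun t => dist (φ (σ' t)) p :=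
      (hφc.comp hσ'.continuous).dist continuous_const
    have key : ∀ t : ℝ, σ r < dist (φ (σ' t)) p := by
      by_contra hcon
      push_neg at hcon
      obtain ⟨t₀, ht₀⟩ := hcon
      -- the distance to p can never be exactly σ r
      have hne : ∀ t : ℝ, dist (φ (σ' t)) p ≠ σ r := by
        intro t ht
        have h1 := havoid t
        have h2 := hcP (σ' t)
        rw [ht] at h2
        linarith [hPσμ r hr]
      -- hence by continuity it stays ≤ σ r everywhere
      have hall : ∀ t : ℝ, dist (φ (σ' t)) p ≤ σ r := by
        intro t
        by_contra hgt
        push_neg at hgt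
        have hmem : σ r ∈ Set.uIcc (dist (φ (σ' t₀)) p) (dist (φ (σ' t)) p) :=
          Set.mem_uIcc.2 (Or.inl ⟨ht₀, le_of_lt hgt⟩)
        obtain ⟨t₁, _, ht₁⟩ :=
          intermediate_value_uIcc (a := t₀) (b := t) hcont.continuousOn hmem
        exact hne t₁ ht₁
      -- but then the geodesic is trapped in a ball, contradicting the escape function
      have h2σ : (0:ℝ) ≤ 2 * σ r := by linarith [hσ r hr]
      have hesc := hP (φ ∘ σ') hγ (2 * σ r) h2σ (P (2 * σ r) + 1) (by linarith)
      have htri : dist ((φ ∘ σ') 0) ((φ ∘ σ') (P (2 * σ r) + 1)) ≤ 2 * σ r := by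
        calc dist ((φ ∘ σ') 0) ((φ ∘ σ') (P (2 * σ r) + 1))
            ≤ dist ((φ ∘ σ') 0) p + dist p ((φ ∘ σ') (P (2 * σ r) + 1)) := dist_triangle _ _ _
          _ ≤ σ r + σ r := by
              have h1 := hall 0
              have h2 := hall (P (2 * σ r) + 1)
              rw [dist_comm] at h2
              exact add_le_add h1 (by rw [dist_comm]; exact hall (P (2 * σ r) + 1))
          _ = 2 * σ r := by ring
      linarith
    exact hzero (φ ∘ σ') hγ key
  have := hst (f ∘ φ) hfφ hcs hintY r hr hzeroY y (lt_of_lt_of_le hx hxy)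
  rw [← hy]
  exact this
end

section
/- Bracket identity along nilpotent geodesics: In the 2-step nilpotent setup, for all t ∈ ℝ one has ⟨[h(t), h'(t)], z₀⟩_Z = ‖h₀‖² − ⟨h₀, e^{t j(z₀)} h₀⟩_H. -/
open MeasureTheory intervalIntegral
open scoped RealInnerProductSpace

/-- **Bracket identity along nilpotent geodesics.** In the 2-step nilpotent setup, with
`h(t) = ∫₀^t e^{s j(z₀)} h₀ ds` and `h'(t) = e^{t j(z₀)} h₀`, one has
`⟨[h(t), h'(t)], z₀⟩ = ‖h₀‖² − ⟨h₀, e^{t j(z₀)} h₀⟩`. -/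
theorem nilpotent_geodesic_bracket_identity
    {H Z : Type*}
    [NormedAddCommGroup H] [InnerProductSpace ℝ H] [FiniteDimensional ℝ H]
    [NormedAddCommGroup Z] [InnerProductSpace ℝ Z] [FiniteDimensional ℝ Z]
    (j : Z →ₗ[ℝ] H →L[ℝ] H)
    (hskew : ∀ (z : Z) (x y : H), ⟪j z x, y⟫ = -⟪x, j z y⟫)
    (bracket : H →ₗ[ℝ] H →ₗ[ℝ] Z)
    (hbracket : ∀ (h k : H) (z : Z), ⟪bracket h k, z⟫ = ⟪j z h, k⟫)
    (z₀ : Z) (h₀ : H) (t : ℝ) :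
    ⟪bracket (∫ s in (0:ℝ)..t, NormedSpace.exp (s • j z₀) h₀)
        (NormedSpace.exp (t • j z₀) h₀), z₀⟫
      = ‖h₀‖ ^ 2 - ⟪h₀, NormedSpace.exp (t • j z₀) h₀⟫ := by
  set A : H →L[ℝ] H := j z₀ with hAdef
  set f : ℝ → H := fun s => NormedSpace.exp (s • A) h₀ with hfdef
  -- derivative of f
  have hf : ∀ s : ℝ, HasDerivAt f (A (f s)) s := by
    intro s
    have h1 := hasDerivAt_exp_smul_const' (𝕂 := ℝ) A s
    have h2 := h1.clm_apply (hasDerivAt_const s h₀)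
    simpa [f] using h2
  have hfc : Continuous f := by
    rw [continuous_iff_continuousAt]
    exact fun s => (hf s).continuousAt
  -- integrability
  have hint : IntervalIntegrable f volume (0:ℝ) t := hfc.intervalIntegrable _ _
  have hint' : IntervalIntegrable (fun s => A (f s)) volume (0:ℝ) t :=
    (A.continuous.comp hfc).intervalIntegrable _ _
  -- FTC
  have key : A (∫ s in (0:ℝ)..t, f s) = f t - h₀ := by
    rw [← A.intervalIntegral_comp_comm hint,
      intervalIntegral.integral_eq_sub_of_hasDerivAt (fun s _ => hf s) hint']
    simp [f, NormedSpace.exp_zero]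
  -- norm preservation
  have hskewA : ∀ x : H, ⟪A x, x⟫ = 0 := by
    intro x
    have h1 := hskew z₀ x x
    have h2 : ⟪A x, x⟫ = ⟪x, A x⟫ := real_inner_comm _ _
    rw [h2] at h1 ⊢
    linarith
  have hnorm : ⟪f t, f t⟫ = ⟪h₀, h₀⟫ := by
    have hg : ∀ s : ℝ, HasDerivAt (fun u => ⟪f u, f u⟫) 0 s := by
      intro s
      have := (hf s).inner ℝ (hf s)
      have hz2 : ⟪f s, A (f s)⟫ = 0 := by
        rw [real_inner_comm]; exact hskewA _
      simpa [hz2, hskewA] using this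
    have := is_const_of_deriv_eq_zero (f := fun u => ⟪f u, f u⟫)
      (fun s => (hg s).differentiableAt) (fun s => (hg s).deriv) t 0
    simpa [f, NormedSpace.exp_zero] using this
  rw [hbracket, key]
  rw [inner_sub_left, hnorm]
  rw [real_inner_self_eq_norm_sq]
end

section
/- Central component formula along nilpotent geodesics: In the 2-step nilpotent setup, for all t ∈ ℝ one has ⟨z(t), z₀⟩_Z = t‖z₀‖² + (t/2)‖h₀‖² − ½ ∫₀^t ⟨h₀, e^{s j(z₀)} h₀⟩_H ds. -/
open MeasureTheory intervalIntegral
open scoped RealInnerProductSpace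

/-- **Central component formula along nilpotent geodesics.** In the 2-step nilpotent setup,
with `h(t) = ∫₀^t e^{s j(z₀)} h₀ ds` and
`z(t) = t z₀ + ½ ∫₀^t [h(s), h'(s)] ds`, one has
`⟨z(t), z₀⟩ = t ‖z₀‖² + (t/2) ‖h₀‖² − ½ ∫₀^t ⟨h₀, e^{s j(z₀)} h₀⟩ ds`. -/
theorem nilpotent_geodesic_central_component
    {H Z : Type*}
    [NormedAddCommGroup H] [InnerProductSpace ℝ H] [FiniteDimensional ℝ H]
    [NormedAddCommGroup Z] [InnerProductSpace ℝ Z] [FiniteDimensional ℝ Z]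
    (j : Z →ₗ[ℝ] H →L[ℝ] H)
    (hskew : ∀ (z : Z) (x y : H), ⟪j z x, y⟫ = -⟪x, j z y⟫)
    (bracket : H →ₗ[ℝ] H →ₗ[ℝ] Z)
    (hbracket : ∀ (h k : H) (z : Z), ⟪bracket h k, z⟫ = ⟪j z h, k⟫)
    (z₀ : Z) (h₀ : H) (t : ℝ) :
    ⟪t • z₀ + (1 / 2 : ℝ) •
        ∫ s in (0:ℝ)..t,
          bracket (∫ u in (0:ℝ)..s, NormedSpace.exp (u • j z₀) h₀)
            (NormedSpace.exp (s • j z₀) h₀), z₀⟫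
      = t * ‖z₀‖ ^ 2 + (t / 2) * ‖h₀‖ ^ 2
        - (1 / 2 : ℝ) * ∫ s in (0:ℝ)..t, ⟪h₀, NormedSpace.exp (s • j z₀) h₀⟫ := by
  set A : H →L[ℝ] H := j z₀ with hA
  set f : ℝ → H := fun s => NormedSpace.exp (s • A) h₀ with hfdef
  -- derivative of f
  have fderiv : ∀ s, HasDerivAt f (A (f s)) s := by
    intro s
    have h1 := hasDerivAt_exp_smul_const' (𝕂 := ℝ) A s
    have h2 := (ContinuousLinearMap.apply ℝ H h₀).hasFDerivAt.comp_hasDerivAt s h1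
    exact h2
  have fcont : Continuous f := by
    have : Differentiable ℝ f := fun s => (fderiv s).differentiableAt
    exact this.continuous
  have fint : ∀ a b : ℝ, IntervalIntegrable f volume a b := fun a b =>
    fcont.intervalIntegrable a b
  set h : ℝ → H := fun s => ∫ u in (0:ℝ)..s, f u with hhdef
  have hcont : Continuous h := intervalIntegral.continuous_primitive fint 0
  have fzero : f 0 = h₀ := by simp [hfdef]
  -- skewness: ⟪A x, x⟫ = 0
  have skew0 : ∀ x : H, ⟪A x, x⟫ = 0 := by
    intro x
    have h1 := hskew z₀ x x
    have h2 := real_inner_comm x ((j z₀) x)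
    show ⟪(j z₀) x, x⟫ = 0
    linarith [h1, h2]
  -- ‖f s‖² constant
  have normconst : ∀ s, ⟪f s, f s⟫ = ⟪h₀, h₀⟫ := by
    intro s
    have dphi : ∀ x : ℝ, HasDerivAt (fun u => ⟪f u, f u⟫) 0 x := by
      intro x
      have := (fderiv x).inner ℝ (fderiv x)
      have e : ⟪f x, A (f x)⟫ + ⟪A (f x), f x⟫ = 0 := by
        have e2 : ⟪f x, A (f x)⟫ = ⟪A (f x), f x⟫ := real_inner_comm _ _
        rw [e2, skew0 (f x)]; ring
      rwa [e] at this
    have := is_const_of_deriv_eq_zero (f := fun u => ⟪f u, f u⟫)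
      (fun x => (dphi x).differentiableAt) (fun x => (dphi x).deriv) s 0
    rw [this, fzero]
  -- A (h s) = f s - h₀
  have Ah : ∀ s, A (h s) = f s - h₀ := by
    intro s
    have e1 : A (h s) = ∫ u in (0:ℝ)..s, A (f u) :=
      (A.intervalIntegral_comp_comm (fint 0 s)).symm
    rw [e1, intervalIntegral.integral_eq_sub_of_hasDerivAt
      (fun u _ => fderiv u) ((A.continuous.comp fcont).intervalIntegrable 0 s), fzero]
  -- integrand identity
  have key : ∀ s, ⟪bracket (h s) (f s), z₀⟫ = ⟪h₀, h₀⟫ - ⟪h₀, f s⟫ := by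
    intro s
    rw [hbracket]
    have : (j z₀) (h s) = A (h s) := rfl
    rw [this, Ah s, inner_sub_left, normconst s, real_inner_comm (f s) h₀]
  -- continuity of the bracket integrand
  have gcont : Continuous fun s => bracket (h s) (f s) := by
    let bL : H →ₗ[ℝ] H →L[ℝ] Z :=
      { toFun := fun x => LinearMap.toContinuousLinearMap (bracket x)
        map_add' := fun x y => by ext k; simp
        map_smul' := fun c x => by ext k; simp }
    let B : H →L[ℝ] H →L[ℝ] Z := LinearMap.toContinuousLinearMap bL
    have : Continuous fun p : H × H => B p.1 p.2 := B.continuous₂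
    exact this.comp (hcont.prodMk fcont)
  -- move inner inside the integral
  have inner_int : ⟪(∫ s in (0:ℝ)..t, bracket (h s) (f s)), z₀⟫
      = ∫ s in (0:ℝ)..t, ⟪bracket (h s) (f s), z₀⟫ := by
    rw [real_inner_comm]
    have gi : IntervalIntegrable (fun s => bracket (h s) (f s)) volume 0 t :=
      gcont.intervalIntegrable 0 t
    have e := ((innerSL ℝ z₀).intervalIntegral_comp_comm gi).symm
    show (innerSL ℝ z₀) (∫ s in (0:ℝ)..t, bracket (h s) (f s)) = _
    rw [e]
    exact intervalIntegral.integral_congr fun s _ => real_inner_comm _ _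
  have intcont : Continuous fun s => ⟪h₀, f s⟫ := by
    have : Continuous fun x : H => ⟪h₀, x⟫ := (innerSL ℝ h₀).continuous
    exact this.comp fcont
  -- compute the integral
  have intcalc : (∫ s in (0:ℝ)..t, ⟪bracket (h s) (f s), z₀⟫)
      = t * ⟪h₀, h₀⟫ - ∫ s in (0:ℝ)..t, ⟪h₀, f s⟫ := by
    rw [intervalIntegral.integral_congr (fun s _ => key s),
      intervalIntegral.integral_sub (intervalIntegrable_const)
        (intcont.intervalIntegrable 0 t)]
    simp [mul_comm]
  -- put it together
  rw [inner_add_left, real_inner_smul_left, real_inner_smul_left, inner_int, intcalc,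
    real_inner_self_eq_norm_sq, real_inner_self_eq_norm_sq]
  ring
end

section
/- Linear growth of the central component: In the 2-step nilpotent setup, for every t ≥ 0 one has ⟨z(t), z₀⟩_Z ≥ t‖z₀‖², and consequently ‖z(t)‖ ≥ t‖z₀‖. -/
open MeasureTheory intervalIntegral
open scoped RealInnerProductSpace

/-- **Linear growth of the central component.** In the 2-step nilpotent setup, with
`h(t) = ∫₀^t e^{s j(z₀)} h₀ ds` and `z(t) = t z₀ + ½ ∫₀^t [h(s), h'(s)] ds`,
for every `t ≥ 0` one has `⟨z(t), z₀⟩ ≥ t ‖z₀‖²`, and consequently `‖z(t)‖ ≥ t ‖z₀‖`. -/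
theorem nilpotent_geodesic_central_growth
    {H Z : Type*}
    [NormedAddCommGroup H] [InnerProductSpace ℝ H] [FiniteDimensional ℝ H]
    [NormedAddCommGroup Z] [InnerProductSpace ℝ Z] [FiniteDimensional ℝ Z]
    (j : Z →ₗ[ℝ] H →L[ℝ] H)
    (hskew : ∀ (z : Z) (x y : H), ⟪j z x, y⟫ = -⟪x, j z y⟫)
    (bracket : H →ₗ[ℝ] H →ₗ[ℝ] Z)
    (hbracket : ∀ (h k : H) (z : Z), ⟪bracket h k, z⟫ = ⟪j z h, k⟫)
    (z₀ : Z) (h₀ : H) (t : ℝ) (ht : 0 ≤ t) :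
    t * ‖z₀‖ ^ 2 ≤
        ⟪t • z₀ + (1 / 2 : ℝ) •
          ∫ s in (0:ℝ)..t,
            bracket (∫ u in (0:ℝ)..s, NormedSpace.exp (u • j z₀) h₀)
              (NormedSpace.exp (s • j z₀) h₀), z₀⟫ ∧
      t * ‖z₀‖ ≤
        ‖t • z₀ + (1 / 2 : ℝ) •
          ∫ s in (0:ℝ)..t,
            bracket (∫ u in (0:ℝ)..s, NormedSpace.exp (u • j z₀) h₀)
              (NormedSpace.exp (s • j z₀) h₀)‖ := by
  set A : H →L[ℝ] H := j z₀ with hA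
  set g : ℝ → H := fun s => NormedSpace.exp (s • A) h₀ with hg
  -- continuity of g
  have contg : Continuous g := by
    have h1 : Continuous fun s : ℝ => NormedSpace.exp (s • A) :=
      continuous_iff_continuousAt.2 fun s => (hasDerivAt_exp_smul_const' (𝕂 := ℝ) A s).continuousAt
    exact h1.clm_apply continuous_const
  -- derivative of g
  have hderivg : ∀ s : ℝ, HasDerivAt g (A (g s)) s := by
    intro s
    have h1 : HasDerivAt (fun u : ℝ => NormedSpace.exp (u • A))
        (A * NormedSpace.exp (s • A)) s := hasDerivAt_exp_smul_const' A s
    have h2 := h1.clm_apply (hasDerivAt_const s h₀)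
    simpa [g] using h2
  have g0 : g 0 = h₀ := by simp [g]
  -- skew-adjointness consequence
  have hinner0 : ∀ v : H, ⟪A v, v⟫ = 0 := by
    intro v
    have h1 := hskew z₀ v v
    have h2 : ⟪v, (j z₀) v⟫ = ⟪(j z₀) v, v⟫ := real_inner_comm _ _
    rw [hA]
    linarith [h1, h2.symm ▸ h1]
  -- norm preservation
  have normg : ∀ s : ℝ, ‖g s‖ = ‖h₀‖ := by
    have hd : ∀ s : ℝ, HasDerivAt (fun u => ⟪g u, g u⟫) 0 s := by
      intro s
      have h1 := (hderivg s).inner ℝ (hderivg s)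
      have e1 := hinner0 (g s)
      have e2 : ⟪g s, A (g s)⟫ = 0 := by rw [real_inner_comm]; exact e1
      rw [e1, e2, add_zero] at h1
      exact h1
    have hconst : ∀ s : ℝ, ⟪g s, g s⟫ = ⟪g 0, g 0⟫ := by
      intro s
      exact is_const_of_deriv_eq_zero (fun x => (hd x).differentiableAt)
        (fun x => (hd x).deriv) s 0
    intro s
    have h3 := hconst s
    rw [g0, real_inner_self_eq_norm_sq, real_inner_self_eq_norm_sq] at h3
    have := norm_nonneg (g s); have := norm_nonneg h₀
    nlinarith
  -- key identity : A (∫₀^s g) = g s - h₀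
  have keyA : ∀ s : ℝ, A (∫ u in (0:ℝ)..s, g u) = g s - h₀ := by
    intro s
    rw [← A.intervalIntegral_comp_comm (contg.intervalIntegrable 0 s)]
    have hint : IntervalIntegrable (fun u => A (g u)) volume 0 s :=
      (A.continuous.comp contg).intervalIntegrable 0 s
    have := intervalIntegral.integral_eq_sub_of_hasDerivAt
      (f := g) (f' := fun u => A (g u)) (fun u _ => hderivg u) hint
    rw [this, g0]
  -- pointwise nonnegativity of the integrand's inner product with z₀
  have hpt : ∀ s : ℝ, 0 ≤ ⟪bracket (∫ u in (0:ℝ)..s, g u) (g s), z₀⟫ := by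
    intro s
    rw [hbracket]
    have h1 : (j z₀) (∫ u in (0:ℝ)..s, g u) = g s - h₀ := keyA s
    rw [h1, inner_sub_left, real_inner_self_eq_norm_sq]
    have hcs : ⟪h₀, g s⟫ ≤ ‖h₀‖ * ‖g s‖ := real_inner_le_norm _ _
    rw [normg s] at hcs ⊢
    nlinarith
  -- continuity of the integrand
  have conthfun : Continuous fun s : ℝ => ∫ u in (0:ℝ)..s, g u :=
    intervalIntegral.continuous_primitive (fun a b => contg.intervalIntegrable a b) 0
  let B2 : H →ₗ[ℝ] (H →L[ℝ] Z) :=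
    { toFun := fun h => LinearMap.toContinuousLinearMap (bracket h)
      map_add' := by intro x y; ext v; simp
      map_smul' := by intro c x; ext v; simp }
  let B : H →L[ℝ] H →L[ℝ] Z := LinearMap.toContinuousLinearMap B2
  have hBval : ∀ x y : H, B x y = bracket x y := fun x y => rfl
  have contF : Continuous fun s : ℝ => bracket (∫ u in (0:ℝ)..s, g u) (g s) := by
    have : Continuous fun s : ℝ => B (∫ u in (0:ℝ)..s, g u) (g s) :=
      (B.continuous.comp conthfun).clm_apply contg
    simpa [hBval] using this
  have hFint : IntervalIntegrable
      (fun s : ℝ => bracket (∫ u in (0:ℝ)..s, g u) (g s)) volume 0 t :=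
    contF.intervalIntegrable 0 t
  -- swap inner product and integral
  have hswap : ⟪∫ s in (0:ℝ)..t, bracket (∫ u in (0:ℝ)..s, g u) (g s), z₀⟫
      = ∫ s in (0:ℝ)..t, ⟪bracket (∫ u in (0:ℝ)..s, g u) (g s), z₀⟫ := by
    have h := (innerSL ℝ z₀).intervalIntegral_comp_comm hFint
    simp only [innerSL_apply_apply] at h
    rw [real_inner_comm, ← h]
    exact intervalIntegral.integral_congr (fun s _ => real_inner_comm _ _)
  have hintnn : 0 ≤ ∫ s in (0:ℝ)..t, ⟪bracket (∫ u in (0:ℝ)..s, g u) (g s), z₀⟫ :=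
    intervalIntegral.integral_nonneg ht (fun s _ => hpt s)
  -- first part
  have part1 : t * ‖z₀‖ ^ 2 ≤
      ⟪t • z₀ + (1 / 2 : ℝ) • ∫ s in (0:ℝ)..t,
        bracket (∫ u in (0:ℝ)..s, g u) (g s), z₀⟫ := by
    rw [inner_add_left, real_inner_smul_left, real_inner_smul_left,
      real_inner_self_eq_norm_sq, hswap]
    linarith
  refine ⟨part1, ?_⟩
  -- second part
  by_cases hz : z₀ = 0
  · simp [hz]
  · have hznorm : 0 < ‖z₀‖ := norm_pos_iff.mpr hz
    have hle : ⟪t • z₀ + (1 / 2 : ℝ) • ∫ s in (0:ℝ)..t,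
        bracket (∫ u in (0:ℝ)..s, g u) (g s), z₀⟫ ≤
        ‖t • z₀ + (1 / 2 : ℝ) • ∫ s in (0:ℝ)..t,
          bracket (∫ u in (0:ℝ)..s, g u) (g s)‖ * ‖z₀‖ :=
      real_inner_le_norm _ _
    have h2 : t * ‖z₀‖ * ‖z₀‖ ≤
        ‖t • z₀ + (1 / 2 : ℝ) • ∫ s in (0:ℝ)..t,
          bracket (∫ u in (0:ℝ)..s, g u) (g s)‖ * ‖z₀‖ := by
      nlinarith [part1]
    exact le_of_mul_le_mul_right h2 hznorm
end

section
/- Uniform quadratic escape estimate for geodesics of 2-step nilpotent Lie groups: For every n ≥ 1 there exists a constant c > 0, depending only on n, with the following property. Let H be an n-dimensional real inner product space, Z a finite-dimensional real inner product space, and j : Z → End(H) linear with j(z) skew-adjoint for every z ∈ Z; define the bracket and the curves h(t), z(t) as in the 2-step nilpotent setup. Then for all z₀ ∈ Z and h₀ ∈ H with ‖z₀‖² + ‖h₀‖² = 1 and all t ≥ 0, one has ‖z(t)‖² + ‖h(t)‖² ≥ c·t². -/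
open MeasureTheory intervalIntegral
open scoped RealInnerProductSpace

set_option maxHeartbeats 1000000 in
/-- **Uniform quadratic escape estimate for geodesics of 2-step nilpotent Lie groups.**
For every `n ≥ 1` there is `c > 0`, depending only on `n`, such that for every 2-step
nilpotent setup `j : Z → End(H)` with `H` of dimension `n`, every unit initial velocity
`z₀ + h₀` and every `t ≥ 0`, the exponential coordinates
`h(t) = ∫₀^t e^{s j(z₀)} h₀ ds` and `z(t) = t z₀ + ½ ∫₀^t [h(s), h'(s)] ds` of the geodesic
satisfy `‖z(t)‖² + ‖h(t)‖² ≥ c t²`. -/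
theorem nilpotent_uniform_quadratic_escape (n : ℕ) (hn : 1 ≤ n) :
    ∃ c : ℝ, 0 < c ∧
      ∀ (H Z : Type)
        [NormedAddCommGroup H] [InnerProductSpace ℝ H] [FiniteDimensional ℝ H]
        [NormedAddCommGroup Z] [InnerProductSpace ℝ Z] [FiniteDimensional ℝ Z],
        Module.finrank ℝ H = n →
        ∀ (j : Z →ₗ[ℝ] H →L[ℝ] H),
          (∀ (z : Z) (x y : H), ⟪j z x, y⟫ = -⟪x, j z y⟫) →
        ∀ (bracket : H →ₗ[ℝ] H →ₗ[ℝ] Z),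
          (∀ (h k : H) (z : Z), ⟪bracket h k, z⟫ = ⟪j z h, k⟫) →
        ∀ (z₀ : Z) (h₀ : H), ‖z₀‖ ^ 2 + ‖h₀‖ ^ 2 = 1 →
        ∀ t : ℝ, 0 ≤ t →
          c * t ^ 2 ≤
            ‖t • z₀ + (1 / 2 : ℝ) •
                ∫ s in (0:ℝ)..t,
                  bracket (∫ u in (0:ℝ)..s, NormedSpace.exp (u • j z₀) h₀)
                    (NormedSpace.exp (s • j z₀) h₀)‖ ^ 2 +
              ‖∫ s in (0:ℝ)..t, NormedSpace.exp (s • j z₀) h₀‖ ^ 2 := by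
  refine ⟨1/16, by norm_num, ?_⟩
  intro H Z _ _ _ _ _ _ hdim j hj bracket hbr z₀ h₀ hunit t ht
  set A : H →L[ℝ] H := j z₀ with hA_def
  set e : ℝ → H := fun s => NormedSpace.exp (s • A) h₀ with he_def
  set h : ℝ → H := fun s => ∫ u in (0:ℝ)..s, e u with hh_def
  have hskew : ∀ x y : H, ⟪A x, y⟫ = -⟪x, A y⟫ := hj z₀
  -- derivative of e
  have he : ∀ s : ℝ, HasDerivAt e (A (e s)) s := by
    intro s
    have h1 : HasDerivAt (fun u : ℝ => NormedSpace.exp (u • A))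
        (A * NormedSpace.exp (s • A)) s := hasDerivAt_exp_smul_const' A s
    have h2 := h1.clm_apply (hasDerivAt_const s h₀)
    simpa [ContinuousLinearMap.mul_apply] using h2
  have he_cont : Continuous e := continuous_iff_continuousAt.2 fun s => (he s).continuousAt
  have he0 : e 0 = h₀ := by simp [he_def]
  -- norm of e is constant
  have hnorm : ∀ s : ℝ, ⟪e s, e s⟫ = ⟪h₀, h₀⟫ := by
    intro s
    have hdiff : Differentiable ℝ (fun u => ⟪e u, e u⟫) :=
      fun u => ((he u).inner ℝ (he u)).differentiableAt
    have hderiv : ∀ u : ℝ, deriv (fun u => ⟪e u, e u⟫) u = 0 := by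
      intro u
      rw [((he u).inner ℝ (he u)).deriv]
      linarith [hskew (e u) (e u)]
    have := is_const_of_deriv_eq_zero hdiff hderiv s 0
    rw [this, he0]
  -- derivative of h
  have hh : ∀ s : ℝ, HasDerivAt h (e s) s := fun s =>
    (he_cont.integral_hasStrictDerivAt 0 s).hasDerivAt
  have hh_cont : Continuous h := continuous_iff_continuousAt.2 fun s => (hh s).continuousAt
  have hh0 : h 0 = 0 := by simp [hh_def]
  -- the scalar integrand is continuous
  have hcont_inner : Continuous fun s => ⟪A (h s), e s⟫ :=
    (A.continuous.comp hh_cont).inner he_cont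
  -- key identity via FTC
  have key : (∫ s in (0:ℝ)..t, ⟪A (h s), e s⟫) = t * ⟪h₀, h₀⟫ - ⟪h t, e t⟫ := by
    have hF : ∀ s ∈ Set.uIcc (0:ℝ) t,
        HasDerivAt (fun u => u * ⟪h₀, h₀⟫ - ⟪h u, e u⟫) (⟪A (h s), e s⟫) s := by
      intro s _
      have hd := (hasDerivAt_mul_const (x := s) ⟪h₀, h₀⟫).sub
        ((hh s).inner ℝ (he s))
      have heq : ⟪h₀, h₀⟫ - (⟪h s, A (e s)⟫ + ⟪e s, e s⟫) = ⟪A (h s), e s⟫ := by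
        have h1 := hskew (h s) (e s)
        have h2 := hnorm s
        linarith
      rwa [heq] at hd
    have hint : IntervalIntegrable (fun s => ⟪A (h s), e s⟫) volume 0 t :=
      hcont_inner.intervalIntegrable 0 t
    have := intervalIntegral.integral_eq_sub_of_hasDerivAt hF hint
    rw [this, hh0]
    simp
  -- continuity and integrability of the bracket integrand
  let bc : H →ₗ[ℝ] (H →L[ℝ] Z) :=
    (LinearMap.toContinuousLinearMap : (H →ₗ[ℝ] Z) ≃ₗ[ℝ] (H →L[ℝ] Z)).toLinearMap.comp bracket
  have hbc_apply : ∀ x y : H, bc x y = bracket x y := fun x y => rfl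
  have hbc_cont : Continuous (fun s => bracket (h s) (e s) : ℝ → Z) := by
    have h1 : Continuous (bc : H → (H →L[ℝ] Z)) := bc.continuous_of_finiteDimensional
    exact (h1.comp hh_cont).clm_apply he_cont
  have hbint : IntervalIntegrable (fun s => bracket (h s) (e s)) volume 0 t :=
    hbc_cont.intervalIntegrable 0 t
  -- pull inner product into the integral
  have hswap : ⟪∫ s in (0:ℝ)..t, bracket (h s) (e s), z₀⟫
      = ∫ s in (0:ℝ)..t, ⟪bracket (h s) (e s), z₀⟫ := by
    have h1 := (innerSL ℝ z₀).intervalIntegral_comp_comm hbint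
    have h2 : ∀ w : Z, (inner ℝ z₀ w : ℝ) = innerSL ℝ z₀ w := fun w => rfl
    rw [real_inner_comm, h2, ← h1]
    refine intervalIntegral.integral_congr fun s _ => ?_
    simp only [innerSL_apply_apply]
    exact real_inner_comm _ _
  have hbr' : ∀ s : ℝ, ⟪bracket (h s) (e s), z₀⟫ = ⟪A (h s), e s⟫ := fun s =>
    hbr (h s) (e s) z₀
  -- the central component
  set zc : Z := t • z₀ + (1 / 2 : ℝ) • ∫ s in (0:ℝ)..t, bracket (h s) (e s) with hzc
  have hinner_zc : ⟪zc, z₀⟫ = t * ‖z₀‖ ^ 2 + (1/2) * (t * ‖h₀‖ ^ 2 - ⟪h t, e t⟫) := by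
    rw [hzc, inner_add_left, real_inner_smul_left, real_inner_smul_left, hswap]
    have : (∫ s in (0:ℝ)..t, ⟪bracket (h s) (e s), z₀⟫)
        = ∫ s in (0:ℝ)..t, ⟪A (h s), e s⟫ := by
      congr 1; ext s; exact hbr' s
    rw [this, key, real_inner_self_eq_norm_sq, real_inner_self_eq_norm_sq h₀]
  -- bounds
  have hz₀1 : ‖z₀‖ ≤ 1 := by nlinarith [norm_nonneg z₀, norm_nonneg h₀, sq_nonneg (‖h₀‖)]
  have hh₀1 : ‖h₀‖ ≤ 1 := by nlinarith [norm_nonneg z₀, norm_nonneg h₀]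
  have het : ‖e t‖ = ‖h₀‖ := by
    have := hnorm t
    rw [real_inner_self_eq_norm_sq, real_inner_self_eq_norm_sq] at this
    nlinarith [norm_nonneg (e t), norm_nonneg h₀]
  have hCS1 : ⟪zc, z₀⟫ ≤ ‖zc‖ := by
    calc ⟪zc, z₀⟫ ≤ ‖zc‖ * ‖z₀‖ := real_inner_le_norm zc z₀
    _ ≤ ‖zc‖ * 1 := by
        exact mul_le_mul_of_nonneg_left hz₀1 (norm_nonneg zc)
    _ = ‖zc‖ := mul_one _
  have hCS2 : ⟪h t, e t⟫ ≤ ‖h t‖ := by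
    calc ⟪h t, e t⟫ ≤ ‖h t‖ * ‖e t‖ := real_inner_le_norm _ _
    _ = ‖h t‖ * ‖h₀‖ := by rw [het]
    _ ≤ ‖h t‖ * 1 := mul_le_mul_of_nonneg_left hh₀1 (norm_nonneg _)
    _ = ‖h t‖ := mul_one _
  have hlow : t / 2 - (1/2) * ‖h t‖ ≤ ‖zc‖ := by
    have h1 : t * ‖z₀‖ ^ 2 + (1/2) * (t * ‖h₀‖ ^ 2) ≥ t / 2 := by nlinarith [sq_nonneg ‖z₀‖]
    nlinarith [hinner_zc, hCS1, hCS2]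
  -- conclude
  have ha : (0:ℝ) ≤ ‖zc‖ := norm_nonneg _
  have hb : (0:ℝ) ≤ ‖h t‖ := norm_nonneg _
  show 1/16 * t ^ 2 ≤ ‖zc‖ ^ 2 + ‖h t‖ ^ 2
  nlinarith [sq_nonneg (‖zc‖ - ‖h t‖), sq_nonneg (2 * ‖zc‖ + ‖h t‖ - t)]
end
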